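/- The Shannon entropy of the temperature-softmax distribution P_γ(t) = exp(S^t/γ)/Σ_k exp(S^k/γ) is nondecreasing in γ > 0. In particular, a lower temperature γ produces a task-id prediction distribution with lower (or equal) entropy. -/
import Mathlib


open Finset

/-- Gibbs' inequality: cross entropy is at least entropy. -/
lemma gibbs_aux {T : ℕ} (p q : Fin T → ℝ) (hp : ∀ t, 0 < p t) (hq : ∀ t, 0 < q t)
    (hp1 : ∑ t, p t = 1) (hq1 : ∑ t, q t = 1) :
    ∑ t, p t * Real.log (q t) ≤ ∑ t, p t * Real.log (p t) := by
  have h : ∑ t, p t * (Real.log (q t) - Real.log (p t)) ≤ 0 := by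
    have hb : ∀ t : Fin T, p t * (Real.log (q t) - Real.log (p t)) ≤ q t - p t := by
      intro t
      have hpos : 0 < q t / p t := div_pos (hq t) (hp t)
      have hlog : Real.log (q t / p t) ≤ q t / p t - 1 :=
        Real.log_le_sub_one_of_pos hpos
      have : Real.log (q t) - Real.log (p t) = Real.log (q t / p t) := by
        rw [Real.log_div (ne_of_gt (hq t)) (ne_of_gt (hp t))]
      rw [this]
      calc p t * Real.log (q t / p t) ≤ p t * (q t / p t - 1) := by
            exact mul_le_mul_of_nonneg_left hlog (le_of_lt (hp t))
        _ = q t - p t := by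
            rw [mul_sub, mul_one, mul_div_cancel₀ _ (ne_of_gt (hp t))]
    calc ∑ t, p t * (Real.log (q t) - Real.log (p t)) ≤ ∑ t, (q t - p t) :=
          Finset.sum_le_sum fun t _ => hb t
      _ = 0 := by rw [Finset.sum_sub_distrib, hp1, hq1]; ring
  have := h
  simp only [mul_sub] at this
  rw [Finset.sum_sub_distrib, sub_nonpos] at this
  exact this

/-- The Shannon entropy `H(γ) = −∑ P_γ(t) log P_γ(t)` of the temperature-softmax
distribution `P_γ(t) = exp(S^t/γ)/∑_k exp(S^k/γ)` is nondecreasing in `γ > 0`: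
a lower temperature yields lower (or equal) entropy. -/
theorem softmax_entropy_monotone_in_temperature (T : ℕ) (hT : 0 < T) (S : Fin T → ℝ)
    (P : ℝ → Fin T → ℝ)
    (hP : ∀ g t, P g t = Real.exp (S t / g) / ∑ k, Real.exp (S k / g))
    (H : ℝ → ℝ) (hH : ∀ g, H g = -∑ t, P g t * Real.log (P g t)) :
    ∀ g1 g2 : ℝ, 0 < g1 → g1 ≤ g2 → H g1 ≤ H g2 := by
  intro g1 g2 hg1 hle
  rcases eq_or_lt_of_le hle with heq | hlt
  · rw [heq]
  have hg2 : 0 < g2 := lt_trans hg1 hlt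
  set Z : ℝ → ℝ := fun g => ∑ k, Real.exp (S k / g) with hZ
  have hZpos : ∀ g, 0 < Z g := by
    intro g
    apply Finset.sum_pos (fun k _ => Real.exp_pos _)
    exact Finset.univ_nonempty_iff.mpr ⟨⟨0, hT⟩⟩
  have hPpos : ∀ g t, 0 < P g t := by
    intro g t
    rw [hP]
    exact div_pos (Real.exp_pos _) (hZpos g)
  have hPsum : ∀ g, ∑ t, P g t = 1 := by
    intro g
    rw [show (∑ t, P g t) = ∑ t, Real.exp (S t / g) / Z g from
      Finset.sum_congr rfl fun t _ => hP g t, ← Finset.sum_div]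
    exact div_self (ne_of_gt (hZpos g))
  have hlogP : ∀ g t, Real.log (P g t) = S t / g - Real.log (Z g) := by
    intro g t
    rw [hP, Real.log_div (ne_of_gt (Real.exp_pos _)) (ne_of_gt (hZpos g)),
      Real.log_exp]
  set E : ℝ → ℝ := fun g => ∑ t, P g t * S t with hE
  have key : ∀ g g' : ℝ, ∑ t, P g t * Real.log (P g' t)
      = E g / g' - Real.log (Z g') := by
    intro g g'
    have : ∀ t : Fin T, P g t * Real.log (P g' t)
        = P g t * S t / g' - P g t * Real.log (Z g') := by
      intro t
      rw [hlogP g' t]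
      ring
    rw [Finset.sum_congr rfl fun t _ => this t, Finset.sum_sub_distrib,
      ← Finset.sum_div, ← Finset.sum_mul, hPsum]
    simp [hE]
  -- Gibbs inequalities
  have G1 : E g1 / g2 - Real.log (Z g2) ≤ E g1 / g1 - Real.log (Z g1) := by
    have := gibbs_aux (P g1) (P g2) (hPpos g1) (hPpos g2) (hPsum g1) (hPsum g2)
    rwa [key g1 g2, key g1 g1] at this
  have G2 : E g2 / g1 - Real.log (Z g1) ≤ E g2 / g2 - Real.log (Z g2) := by
    have := gibbs_aux (P g2) (P g1) (hPpos g2) (hPpos g1) (hPsum g2) (hPsum g1)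
    rwa [key g2 g1, key g2 g2] at this
  -- From G1 + G2 : E g2 * (1/g1 - 1/g2) ≤ E g1 * (1/g1 - 1/g2)
  have hd : 0 < 1 / g1 - 1 / g2 := by
    rw [sub_pos]
    exact one_div_lt_one_div_of_lt hg1 hlt
  have hEE : E g2 ≤ E g1 := by
    have h1 : E g2 * (1 / g1 - 1 / g2) ≤ E g1 * (1 / g1 - 1 / g2) := by
      have l1 : E g2 / g1 - E g2 / g2 ≤ Real.log (Z g1) - Real.log (Z g2) := by
        linarith
      have l2 : Real.log (Z g1) - Real.log (Z g2) ≤ E g1 / g1 - E g1 / g2 := by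
        linarith
      have : E g2 / g1 - E g2 / g2 ≤ E g1 / g1 - E g1 / g2 := le_trans l1 l2
      calc E g2 * (1 / g1 - 1 / g2) = E g2 / g1 - E g2 / g2 := by ring
        _ ≤ E g1 / g1 - E g1 / g2 := this
        _ = E g1 * (1 / g1 - 1 / g2) := by ring
    exact le_of_mul_le_mul_right h1 hd
  -- Conclude
  rw [hH g1, hH g2, neg_le_neg_iff, key g2 g2, key g1 g1]
  calc E g2 / g2 - Real.log (Z g2) ≤ E g1 / g2 - Real.log (Z g2) := by gcongr
    _ ≤ E g1 / g1 - Real.log (Z g1) := G1
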